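/- Let f : (ℝ ∪ {-∞})^n → (ℝ ∪ {-∞})^n be order-preserving, additively homogeneous, and continuous (in the topology induced by the metric d(x,y) = |e^x − e^y| on each coordinate). For any x ∈ ℝ^n, if there exists a nontrivial u ∈ (ℝ ∪ {-∞})^n (u not identically -∞) and λ ∈ ℝ with f(u) ≥ λ + u, then lim sup_{N → ∞} max_k f^N_k(x)/N ≥ λ. -/

import Mathlib

/-- Collatz–Wielandt lower bound. For an order-preserving,
additively homogeneous, continuous self-map `f` of `(ℝ ∪ {-∞})^n` (modelled
inside `EReal`), if there is a nontrivial `u ∈ (ℝ ∪ {-∞})^n` and `λ ∈ ℝ` with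
`f(u) ≥ λ + u`, then `limsup_N max_k f^N_k(x)/N ≥ λ` for any real `x`. -/
theorem collatz_wielandt_lower (n : ℕ)
    (f : (Fin n → EReal) → (Fin n → EReal))
    (hmono : Monotone f)
    (hhom : ∀ (c : ℝ) (x : Fin n → EReal),
      f (fun i => (c : EReal) + x i) = fun i => (c : EReal) + f x i)
    (hcont : Continuous f)
    (x : Fin n → ℝ)
    (u : Fin n → EReal) (hu_bot : ∃ k, u k ≠ ⊥) (hu_top : ∀ k, u k ≠ ⊤)
    (lam : ℝ)
    (hfu : ∀ k, (lam : EReal) + u k ≤ f u k) :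
    (lam : EReal) ≤
      Filter.limsup
        (fun N : ℕ =>
          (((N : ℝ)⁻¹ : ℝ) : EReal) * ⨆ k, f^[N] (fun i => ((x i : ℝ) : EReal)) k)
        Filter.atTop := by
  classical
  obtain ⟨k₀, hk₀⟩ := hu_bot
  set X : Fin n → EReal := fun i => ((x i : ℝ) : EReal) with hX
  have hhomN : ∀ (N : ℕ) (c : ℝ) (y : Fin n → EReal),
      f^[N] (fun i => (c : EReal) + y i) = fun i => (c : EReal) + f^[N] y i := by
    intro N
    induction N with
    | zero => intro c y; simp
    | succ N ih =>
      intro c y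
      rw [Function.iterate_succ_apply, hhom, ih]
      simp [Function.iterate_succ_apply]
  -- lower bound on iterates at u
  have hlow : ∀ N : ℕ, ∀ k, ((N * lam : ℝ) : EReal) + u k ≤ f^[N] u k := by
    intro N
    induction N with
    | zero => intro k; simp
    | succ N ih =>
      intro k
      have h2 : (lam : EReal) + f^[N] u k ≤ f^[N] (f u) k := by
        have := hmono.iterate N (f := f) (show (fun i => (lam : EReal) + u i) ≤ f u from hfu)
        have h3 := this k
        rw [hhomN N lam u] at h3
        exact h3
      calc (((N + 1 : ℕ) * lam : ℝ) : EReal) + u k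
          = (lam : EReal) + (((N * lam : ℝ) : EReal) + u k) := by
            rw [show ((N + 1 : ℕ) : ℝ) * lam = lam + (N : ℝ) * lam by push_cast; ring,
              EReal.coe_add, add_assoc]
        _ ≤ (lam : EReal) + f^[N] u k := add_le_add_right (ih k) _
        _ ≤ f^[N] (f u) k := h2
        _ = f^[N + 1] u k := by rw [Function.iterate_succ_apply]
  -- choose c with u ≤ c + X
  have hn : Nonempty (Fin n) := ⟨k₀⟩
  set c : ℝ := ⨆ k, ((u k).toReal - x k) with hc
  have huX : ∀ k, u k ≤ (c : EReal) + X k := by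
    intro k
    have h1 : (u k).toReal - x k ≤ c :=
      le_ciSup (f := fun k => (u k).toReal - x k) (Set.Finite.bddAbove (Set.finite_range _)) k
    have h2 : u k ≤ ((u k).toReal : EReal) := EReal.le_coe_toReal (hu_top k)
    calc u k ≤ ((u k).toReal : EReal) := h2
      _ ≤ ((c + x k : ℝ) : EReal) := by
          exact EReal.coe_le_coe_iff.2 (by linarith)
      _ = (c : EReal) + X k := by rw [EReal.coe_add]
  -- main bound: for all N, (N*lam + a - c : ℝ) ≤ ⨆ k, f^[N] X k, where a = (u k₀).toReal
  set a : ℝ := (u k₀).toReal with ha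
  have hua : u k₀ = (a : EReal) := (EReal.coe_toReal (hu_top k₀) hk₀).symm
  have hmain : ∀ N : ℕ, ((N * lam + a - c : ℝ) : EReal) ≤ ⨆ k, f^[N] X k := by
    intro N
    have h1 : ((N * lam : ℝ) : EReal) + u k₀ ≤ f^[N] u k₀ := hlow N k₀
    have h2 : f^[N] u k₀ ≤ (c : EReal) + f^[N] X k₀ := by
      have := hmono.iterate N (f := f) (show u ≤ (fun i => (c : EReal) + X i) from huX) k₀
      rwa [hhomN N c X] at this
    have h3 : f^[N] X k₀ ≤ ⨆ k, f^[N] X k := le_iSup _ k₀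
    have h4 : ((N * lam + a : ℝ) : EReal) ≤ (c : EReal) + ⨆ k, f^[N] X k := by
      calc ((N * lam + a : ℝ) : EReal) = ((N * lam : ℝ) : EReal) + u k₀ := by
            rw [hua, EReal.coe_add]
        _ ≤ f^[N] u k₀ := h1
        _ ≤ (c : EReal) + f^[N] X k₀ := h2
        _ ≤ (c : EReal) + ⨆ k, f^[N] X k := add_le_add_right h3 _
    have h5 : ((N * lam + a : ℝ) : EReal) - (c : EReal) ≤ ⨆ k, f^[N] X k :=
      (EReal.sub_le_iff_le_add (.inl (EReal.coe_ne_bot c)) (.inl (EReal.coe_ne_top c))).2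
        (by rw [add_comm ((c : EReal))] at h4; exact h4)
    calc ((N * lam + a - c : ℝ) : EReal)
        = ((N * lam + a : ℝ) : EReal) - (c : EReal) := by rw [EReal.coe_sub]
      _ ≤ ⨆ k, f^[N] X k := h5
  -- comparison sequence
  set h : ℕ → EReal := fun N => ((lam + (a - c) / N : ℝ) : EReal) with hh
  have hle : ∀ N : ℕ, 1 ≤ N →
      h N ≤ (((N : ℝ)⁻¹ : ℝ) : EReal) * ⨆ k, f^[N] X k := by
    intro N hN
    have hNpos : (0:ℝ) < (N:ℝ) := by positivity
    have hmul := mul_le_mul_of_nonneg_left (hmain N)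
      (show (0:EReal) ≤ (((N : ℝ)⁻¹ : ℝ) : EReal) by
        exact_mod_cast inv_nonneg.2 hNpos.le)
    calc h N = ((((N : ℝ)⁻¹ * ((N : ℝ) * lam + a - c) : ℝ)) : EReal) := by
          show ((lam + (a - c) / (N : ℝ) : ℝ) : EReal) = _
          norm_cast
          field_simp
          ring
      _ = (((N : ℝ)⁻¹ : ℝ) : EReal) * ((N * lam + a - c : ℝ) : EReal) := EReal.coe_mul _ _
      _ ≤ (((N : ℝ)⁻¹ : ℝ) : EReal) * ⨆ k, f^[N] X k := hmul
  have htend : Filter.Tendsto h Filter.atTop (nhds (lam : EReal)) := by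
    have hr : Filter.Tendsto (fun N : ℕ => lam + (a - c) / N) Filter.atTop (nhds lam) := by
      have h0 : Filter.Tendsto (fun N : ℕ => (a - c) / (N : ℝ)) Filter.atTop (nhds 0) :=
        tendsto_const_div_atTop_nhds_zero_nat (a - c)
      simpa using (tendsto_const_nhds (x := lam)).add h0
    exact (EReal.continuous_coe_iff.mpr continuous_id).continuousAt.tendsto.comp hr
  have hlimh : Filter.limsup h Filter.atTop = (lam : EReal) :=
    htend.limsup_eq
  rw [← hlimh]
  have hev : h ≤ᶠ[Filter.atTop]
      (fun N : ℕ => (((N : ℝ)⁻¹ : ℝ) : EReal) * ⨆ k, f^[N] X k) := by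
    filter_upwards [Filter.eventually_ge_atTop 1] with N hN
    exact hle N hN
  exact Filter.limsup_le_limsup hev
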